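/- arXiv:1111.5979 — 5 statements merged into one kernel-verified Lean document; each statement's English description precedes it below -/
import Mathlib

section
/- Let D be a finite set of points in ℝ² whose pairwise Euclidean distances are all at least 2, let c, c' ∈ D with dist(c,c') = 2, let m = (c + c')/2, and let b = (lift(c) + lift(c'))/2. Define the affine functional h : ℝ³ → ℝ by h(p₁,p₂,p₃) = p₃ − 2⟨m,(p₁,p₂)⟩ + ‖m‖² − 1. Then h(lift(c)) = h(lift(c')) = h(b) = 0, and h(lift(d)) > 0 for every d ∈ D with d ≠ c and d ≠ c'. -/
/-- The standard lifting map to the elliptic paraboloid: `(x₁, x₂) ↦ (x₁, x₂, x₁² + x₂²)`. -/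
noncomputable def lift (x : EuclideanSpace ℝ (Fin 2)) : EuclideanSpace ℝ (Fin 3) :=
  (WithLp.equiv 2 (Fin 3 → ℝ)).symm ![x 0, x 1, x 0 ^ 2 + x 1 ^ 2]

/-- Let `D ⊆ ℝ²` be finite with pairwise distances at least `2`, let
`c, c' ∈ D` with `dist c c' = 2`, let `m = (c + c')/2` and `b = (lift c + lift c')/2`.
With `h(p₁,p₂,p₃) = p₃ − 2⟨m,(p₁,p₂)⟩ + ‖m‖² − 1`, we have
`h (lift c) = h (lift c') = h b = 0`, and `h (lift d) > 0` for every `d ∈ D` other than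
`c` and `c'`. -/
theorem blocking_hyperplane (D : Set (EuclideanSpace ℝ (Fin 2)))
    (hD : D.Finite) (hsep : ∀ p ∈ D, ∀ q ∈ D, p ≠ q → 2 ≤ dist p q)
    (c : EuclideanSpace ℝ (Fin 2)) (hc : c ∈ D)
    (c' : EuclideanSpace ℝ (Fin 2)) (hc' : c' ∈ D) (htouch : dist c c' = 2)
    (m : EuclideanSpace ℝ (Fin 2)) (hm : m = (1 / 2 : ℝ) • (c + c'))
    (b : EuclideanSpace ℝ (Fin 3)) (hb : b = (1 / 2 : ℝ) • (lift c + lift c'))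
    (h : EuclideanSpace ℝ (Fin 3) → ℝ)
    (hh : ∀ p, h p =
      p 2 - 2 * (inner ℝ m ((WithLp.equiv 2 (Fin 2 → ℝ)).symm ![p 0, p 1]) : ℝ) + ‖m‖ ^ 2 - 1) :
    h (lift c) = 0 ∧ h (lift c') = 0 ∧ h b = 0 ∧
      ∀ d ∈ D, d ≠ c → d ≠ c' → 0 < h (lift d) := by
  have hdist : ∀ p q : EuclideanSpace ℝ (Fin 2),
      dist p q ^ 2 = (p 0 - q 0) ^ 2 + (p 1 - q 1) ^ 2 := by
    intro p q
    rw [EuclideanSpace.dist_eq, Real.sq_sqrt (by positivity)]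
    simp [Fin.sum_univ_two, Real.dist_eq, sq_abs]
  have hnorm : ‖m‖ ^ 2 = m 0 ^ 2 + m 1 ^ 2 := by
    rw [EuclideanSpace.norm_eq, Real.sq_sqrt (by positivity)]
    simp [Fin.sum_univ_two, sq]
  have hinner : ∀ x y : ℝ,
      (inner ℝ m ((WithLp.equiv 2 (Fin 2 → ℝ)).symm ![x, y]) : ℝ) = m 0 * x + m 1 * y := by
    intro x y
    simp [PiLp.inner_apply, Fin.sum_univ_two, WithLp.equiv_symm_apply, PiLp.toLp_apply, mul_comm]
  have hm0 : m 0 = (c 0 + c' 0) / 2 := by rw [hm]; simp [PiLp.smul_apply, PiLp.add_apply]; ring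
  have hm1 : m 1 = (c 1 + c' 1) / 2 := by rw [hm]; simp [PiLp.smul_apply, PiLp.add_apply]; ring
  have hlift : ∀ d : EuclideanSpace ℝ (Fin 2),
      lift d 0 = d 0 ∧ lift d 1 = d 1 ∧ lift d 2 = d 0 ^ 2 + d 1 ^ 2 := by
    intro d; refine ⟨rfl, rfl, rfl⟩
  have hkey : ∀ d : EuclideanSpace ℝ (Fin 2),
      h (lift d) = (d 0 - m 0) ^ 2 + (d 1 - m 1) ^ 2 - 1 := by
    intro d
    rw [hh, (hlift d).1, (hlift d).2.1, (hlift d).2.2, hinner, hnorm]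
    ring
  have htouch2 : (c 0 - c' 0) ^ 2 + (c 1 - c' 1) ^ 2 = 4 := by
    have := hdist c c'
    rw [htouch] at this; linarith
  refine ⟨?_, ?_, ?_, ?_⟩
  · rw [hkey, hm0, hm1]; nlinarith [htouch2]
  · rw [hkey, hm0, hm1]; nlinarith [htouch2]
  · have hb0 : b 0 = m 0 := by
      rw [hb, hm0]
      simp [PiLp.smul_apply, PiLp.add_apply, (hlift c).1, (hlift c').1]; ring
    have hb1 : b 1 = m 1 := by
      rw [hb, hm1]
      simp [PiLp.smul_apply, PiLp.add_apply, (hlift c).2.1, (hlift c').2.1]; ring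
    have hb2 : b 2 = ((c 0 ^ 2 + c 1 ^ 2) + (c' 0 ^ 2 + c' 1 ^ 2)) / 2 := by
      rw [hb]
      simp [PiLp.smul_apply, PiLp.add_apply, (hlift c).2.2, (hlift c').2.2]; ring
    rw [hh, hb0, hb1, hb2, hinner, hnorm, hm0, hm1]
    nlinarith [htouch2]
  · intro d hd hdc hdc'
    have h1 : 2 ≤ dist d c := hsep d hd c hc hdc
    have h2 : 2 ≤ dist d c' := hsep d hd c' hc' hdc'
    have e1 := hdist d c
    have e2 := hdist d c'
    have h1' : 4 ≤ (d 0 - c 0) ^ 2 + (d 1 - c 1) ^ 2 := by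
      have := pow_le_pow_left₀ (by norm_num : (0:ℝ) ≤ 2) h1 2
      rw [e1] at this; linarith
    have h2' : 4 ≤ (d 0 - c' 0) ^ 2 + (d 1 - c' 1) ^ 2 := by
      have := pow_le_pow_left₀ (by norm_num : (0:ℝ) ≤ 2) h2 2
      rw [e2] at this; linarith
    rw [hkey, hm0, hm1]
    have id0 : (d 0 - (c 0 + c' 0) / 2) ^ 2 + (d 1 - (c 1 + c' 1) / 2) ^ 2 =
        ((d 0 - c 0) ^ 2 + (d 1 - c 1) ^ 2) / 2 + ((d 0 - c' 0) ^ 2 + (d 1 - c' 1) ^ 2) / 2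
          - ((c 0 - c' 0) ^ 2 + (c 1 - c' 1) ^ 2) / 4 := by ring
    linarith [h1', h2', htouch2]
end

section
/- Let D be a finite set of points in ℝ² whose pairwise Euclidean distances are all at least 2, and let c, c' ∈ D with dist(c,c') = 2. Let b = (lift(c) + lift(c'))/2 be the corresponding blocking point. Then for every subset Q ⊆ lift(D), the point b lies in the convex hull of Q if and only if both lift(c) ∈ Q and lift(c') ∈ Q. -/
lemma lift_apply0 (x : EuclideanSpace ℝ (Fin 2)) : lift x 0 = x 0 := rfl
lemma lift_apply1 (x : EuclideanSpace ℝ (Fin 2)) : lift x 1 = x 1 := rfl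
lemma lift_apply2 (x : EuclideanSpace ℝ (Fin 2)) : lift x 2 = x 0 ^ 2 + x 1 ^ 2 := rfl

lemma sum_smul_apply_euclid (ι : Type) (t : Finset ι) (w : ι → ℝ)
    (z : ι → EuclideanSpace ℝ (Fin 3)) (j : Fin 3) :
    (∑ i ∈ t, w i • z i) j = ∑ i ∈ t, w i * z i j := by
  classical
  induction t using Finset.induction with
  | empty => rfl
  | insert _ _ h ih => rw [Finset.sum_insert h, Finset.sum_insert h, ← ih]; rfl

lemma dist_sq_eq (x y : EuclideanSpace ℝ (Fin 2)) :
    dist x y ^ 2 = (x 0 - y 0) ^ 2 + (x 1 - y 1) ^ 2 := by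
  rw [EuclideanSpace.dist_eq, Real.sq_sqrt (by positivity)]
  simp [Fin.sum_univ_two, Real.dist_eq, sq_abs]

/-- Let `D ⊆ ℝ²` be finite with pairwise distances at least `2`, let
`c, c' ∈ D` with `dist c c' = 2`, and let `b = (lift c + lift c')/2` be the blocking
point. Then for every `Q ⊆ lift '' D`, the point `b` lies in the convex hull of `Q`
iff both `lift c ∈ Q` and `lift c' ∈ Q`. -/
theorem blocking_point_encoding (D : Set (EuclideanSpace ℝ (Fin 2)))
    (hD : D.Finite) (hsep : ∀ p ∈ D, ∀ q ∈ D, p ≠ q → 2 ≤ dist p q)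
    (c : EuclideanSpace ℝ (Fin 2)) (hc : c ∈ D)
    (c' : EuclideanSpace ℝ (Fin 2)) (hc' : c' ∈ D) (htouch : dist c c' = 2)
    (b : EuclideanSpace ℝ (Fin 3)) (hb : b = (1 / 2 : ℝ) • (lift c + lift c')) :
    ∀ Q ⊆ lift '' D, (b ∈ convexHull ℝ Q ↔ lift c ∈ Q ∧ lift c' ∈ Q) := by
  intro Q hQ
  have hcc' : c ≠ c' := by
    intro h; rw [h, dist_self] at htouch; norm_num at htouch
  -- the affine functional vanishing on lift c, lift c', positive on other lifted points
  set f : EuclideanSpace ℝ (Fin 3) → ℝ := fun y =>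
    y 2 - (c 0 + c' 0) * y 0 - (c 1 + c' 1) * y 1 + (c 0 * c' 0 + c 1 * c' 1) with hf
  have hfval : ∀ p : EuclideanSpace ℝ (Fin 2), f (lift p)
      = (p 0 - c 0) * (p 0 - c' 0) + (p 1 - c 1) * (p 1 - c' 1) := by
    intro p
    simp only [hf, lift_apply0, lift_apply1, lift_apply2]
    ring
  have htouch_sq : (c 0 - c' 0) ^ 2 + (c 1 - c' 1) ^ 2 = 4 := by
    have := dist_sq_eq c c'; rw [htouch] at this; linarith
  have hfpos : ∀ p ∈ D, p ≠ c → p ≠ c' → 0 < f (lift p) := by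
    intro p hp h1 h2
    have d1 := hsep p hp c hc h1
    have d2 := hsep p hp c' hc' h2
    have e1 : 4 ≤ (p 0 - c 0) ^ 2 + (p 1 - c 1) ^ 2 := by
      have h := dist_sq_eq p c; nlinarith [dist_nonneg (x := p) (y := c)]
    have e2 : 4 ≤ (p 0 - c' 0) ^ 2 + (p 1 - c' 1) ^ 2 := by
      have h := dist_sq_eq p c'; nlinarith [dist_nonneg (x := p) (y := c')]
    rw [hfval]
    nlinarith
  have hbcoord : ∀ j, b j = (1 / 2 : ℝ) * (lift c j + lift c' j) := by
    intro j; rw [hb]; simp; ring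
  have hfb : f b = 0 := by
    simp only [hf, hbcoord 0, hbcoord 1, hbcoord 2,
      lift_apply0, lift_apply1, lift_apply2]
    ring
  have hlift_ne : lift c ≠ lift c' := by
    intro h
    apply hcc'
    have h0 : c 0 = c' 0 := by
      have := congrArg (fun v => v 0) h; simpa [lift_apply0] using this
    have h1 : c 1 = c' 1 := by
      have := congrArg (fun v => v 1) h; simpa [lift_apply1] using this
    ext i
    fin_cases i
    · exact h0
    · exact h1
  have hbne : b ≠ lift c ∧ b ≠ lift c' := by
    constructor
    · intro h
      apply hlift_ne
      have h1 : c 1 = (1/2) * (c 1 + c' 1) := by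
        have := congrArg (fun v => v 1) h.symm
        rw [hbcoord 1] at this
        simpa [lift_apply1, eq_comm] using this.symm
      have h0 : c 0 = (1/2) * (c 0 + c' 0) := by
        have := congrArg (fun v => v 0) h.symm
        rw [hbcoord 0] at this
        simpa [lift_apply0, eq_comm] using this.symm
      have e0 : c 0 = c' 0 := by linarith
      have e1 : c 1 = c' 1 := by linarith
      have : c = c' := by ext i; fin_cases i; exacts [e0, e1]
      rw [this]
    · intro h
      apply hlift_ne
      have h1 : c' 1 = (1/2) * (c 1 + c' 1) := by
        have := congrArg (fun v => v 1) h.symm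
        rw [hbcoord 1] at this
        simpa [lift_apply1, eq_comm] using this.symm
      have h0 : c' 0 = (1/2) * (c 0 + c' 0) := by
        have := congrArg (fun v => v 0) h.symm
        rw [hbcoord 0] at this
        simpa [lift_apply0, eq_comm] using this.symm
      have e0 : c 0 = c' 0 := by linarith
      have e1 : c 1 = c' 1 := by linarith
      have : c = c' := by ext i; fin_cases i; exacts [e0, e1]
      rw [this]
  constructor
  · intro hbQ
    rw [convexHull_eq] at hbQ
    obtain ⟨ι, t, w, z, hw0, hw1, hz, hcm⟩ := hbQ
    rw [Finset.centerMass_eq_of_sum_1 _ _ hw1] at hcm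
    have hcoord : ∀ j, b j = ∑ i ∈ t, w i * z i j := by
      intro j
      rw [← hcm, sum_smul_apply_euclid]
    -- f is affine, so f b is the weighted sum of f (z i)
    have hsum : ∑ i ∈ t, w i * f (z i) = 0 := by
      have : ∑ i ∈ t, w i * f (z i)
          = (∑ i ∈ t, w i * z i 2) - (c 0 + c' 0) * (∑ i ∈ t, w i * z i 0)
            - (c 1 + c' 1) * (∑ i ∈ t, w i * z i 1)
            + (c 0 * c' 0 + c 1 * c' 1) * (∑ i ∈ t, w i) := by
        rw [Finset.mul_sum, Finset.mul_sum, Finset.mul_sum,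
          ← Finset.sum_sub_distrib, ← Finset.sum_sub_distrib, ← Finset.sum_add_distrib]
        exact Finset.sum_congr rfl fun i _ => by simp only [hf]; ring
      rw [this, hw1, ← hcoord 0, ← hcoord 1, ← hcoord 2, mul_one]
      have := hfb
      simp only [hf] at this ⊢
      linarith
    -- each f (z i) ≥ 0, with equality only at lift c, lift c'
    have hz_mem : ∀ i ∈ t, w i ≠ 0 → z i = lift c ∨ z i = lift c' := by
      intro i hi hwi
      obtain ⟨p, hp, hzp⟩ := hQ (hz i hi)
      by_contra hcon
      push_neg at hcon
      have hp1 : p ≠ c := fun h => hcon.1 (by rw [← hzp, h])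
      have hp2 : p ≠ c' := fun h => hcon.2 (by rw [← hzp, h])
      have hpos := hfpos p hp hp1 hp2
      have hterm : ∀ j ∈ t, 0 ≤ w j * f (z j) := by
        intro j hj
        apply mul_nonneg (hw0 j hj)
        obtain ⟨q, hq, hzq⟩ := hQ (hz j hj)
        by_cases hq1 : q = c
        · rw [← hzq, hq1, hfval]; ring_nf; nlinarith [hfval c]
        · by_cases hq2 : q = c'
          · rw [← hzq, hq2, hfval]; nlinarith [hfval c']
          · exact le_of_lt (by rw [← hzq]; exact hfpos q hq hq1 hq2)
      have := (Finset.sum_eq_zero_iff_of_nonneg hterm).mp hsum i hi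
      rw [← hzp] at this
      exact hwi (by
        rcases mul_eq_zero.mp this with h | h
        · exact h
        · exact absurd h (ne_of_gt hpos))
    constructor
    · -- lift c ∈ Q
      by_contra hnc
      apply hbne.2
      have : b = ∑ i ∈ t, w i • lift c' := by
        rw [← hcm]
        refine Finset.sum_congr rfl fun i hi => ?_
        by_cases hwi : w i = 0
        · rw [hwi, zero_smul, zero_smul]
        · rcases hz_mem i hi hwi with h | h
          · exact absurd (h ▸ hz i hi) hnc
          · rw [h]
      rw [this, ← Finset.sum_smul, hw1, one_smul]
    · by_contra hnc
      apply hbne.1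
      have : b = ∑ i ∈ t, w i • lift c := by
        rw [← hcm]
        refine Finset.sum_congr rfl fun i hi => ?_
        by_cases hwi : w i = 0
        · rw [hwi, zero_smul, zero_smul]
        · rcases hz_mem i hi hwi with h | h
          · rw [h]
          · exact absurd (h ▸ hz i hi) hnc
      rw [this, ← Finset.sum_smul, hw1, one_smul]
  · rintro ⟨h1, h2⟩
    rw [hb, smul_add]
    exact (convex_convexHull ℝ Q) (subset_convexHull ℝ Q h1) (subset_convexHull ℝ Q h2)
      (by norm_num) (by norm_num) (by norm_num)
end

section
/- Let D be a finite set of points in ℝ² whose pairwise Euclidean distances are all at least 2, and let B = { (lift(c) + lift(c'))/2 : c, c' ∈ D, dist(c,c') = 2 } be the set of blocking points. Then B is in convex position: no blocking point lies in the convex hull of the remaining blocking points. -/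
/-- The set of blocking points of `D`: midpoints `(lift c + lift c')/2` over all touching
pairs `c, c' ∈ D` (i.e. pairs with `dist c c' = 2`). -/
noncomputable def blockers (D : Set (EuclideanSpace ℝ (Fin 2))) :
    Set (EuclideanSpace ℝ (Fin 3)) :=
  {b | ∃ c ∈ D, ∃ c' ∈ D, dist c c' = 2 ∧ b = (1 / 2 : ℝ) • (lift c + lift c')}

lemma blocker_eq {D : Set (EuclideanSpace ℝ (Fin 2))} {b : EuclideanSpace ℝ (Fin 3)}
    (hb : b ∈ blockers D) : b 2 = b 0 ^ 2 + b 1 ^ 2 + 1 := by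
  obtain ⟨c, _, c', _, hd, rfl⟩ := hb
  have h4 : (c 0 - c' 0) ^ 2 + (c 1 - c' 1) ^ 2 = 4 := by
    have := congrArg (· ^ 2) hd
    rw [EuclideanSpace.dist_eq] at this
    simp only [Real.sq_sqrt (by positivity : (0:ℝ) ≤ ∑ i, dist (c i) (c' i) ^ 2)] at this
    rw [Fin.sum_univ_two] at this
    norm_num at this; simpa [Real.dist_eq, sq_abs] using this
  simp only [lift, WithLp.equiv_symm_apply, PiLp.toLp_apply, PiLp.smul_apply, PiLp.add_apply]
  simp only [Matrix.cons_val_zero, Matrix.cons_val_one, Matrix.head_cons,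
    Matrix.cons_val_two, Matrix.tail_cons, smul_eq_mul]
  nlinarith [h4]


/-- For a finite `D ⊆ ℝ²` with pairwise distances at least `2`, the set `B`
of blocking points is in convex position: no blocking point lies in the convex hull of the
remaining blocking points. -/
theorem blockers_convexPosition (D : Set (EuclideanSpace ℝ (Fin 2)))
    (hD : D.Finite) (hsep : ∀ p ∈ D, ∀ q ∈ D, p ≠ q → 2 ≤ dist p q) :
    ∀ b ∈ blockers D, b ∉ convexHull ℝ (blockers D \ {b}) := by
  intro b hb hmem
  rw [convexHull_eq] at hmem
  obtain ⟨ι, t, w, z, hw0, hw1, hz, hcm⟩ := hmem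
  have hbrep : b = ∑ i ∈ t, w i • z i := by
    rw [← hcm, Finset.centerMass_eq_of_sum_1 _ _ hw1]
  have hcoord : ∀ j : Fin 3, b j = ∑ i ∈ t, w i * z i j := by
    intro j
    rw [hbrep]
    rw [WithLp.ofLp_sum, Finset.sum_apply]; rfl
  have hbpar : b 2 = b 0 ^ 2 + b 1 ^ 2 + 1 := blocker_eq hb
  have hzpar : ∀ i ∈ t, z i 2 = z i 0 ^ 2 + z i 1 ^ 2 + 1 := fun i hi =>
    blocker_eq (hz i hi).1
  have key : ∑ i ∈ t, w i * ((z i 0 - b 0) ^ 2 + (z i 1 - b 1) ^ 2) = 0 := by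
    have expand : ∀ i ∈ t, w i * ((z i 0 - b 0) ^ 2 + (z i 1 - b 1) ^ 2) =
        (w i * z i 2) - w i - 2 * b 0 * (w i * z i 0) - 2 * b 1 * (w i * z i 1)
          + (b 0 ^ 2 + b 1 ^ 2) * w i := by
      intro i hi
      rw [hzpar i hi]; ring
    rw [Finset.sum_congr rfl expand]
    simp only [Finset.sum_add_distrib, Finset.sum_sub_distrib, ← Finset.mul_sum]
    rw [← hcoord 0, ← hcoord 1, ← hcoord 2, hw1, hbpar]
    ring
  obtain ⟨i, hi, hwi⟩ : ∃ i ∈ t, 0 < w i := by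
    by_contra h
    push_neg at h
    have : ∑ i ∈ t, w i = 0 := Finset.sum_eq_zero fun i hi =>
      le_antisymm (h i hi) (hw0 i hi)
    rw [hw1] at this; norm_num at this
  have hterm : w i * ((z i 0 - b 0) ^ 2 + (z i 1 - b 1) ^ 2) = 0 := by
    have hnn : ∀ j ∈ t, 0 ≤ w j * ((z j 0 - b 0) ^ 2 + (z j 1 - b 1) ^ 2) := fun j hj =>
      mul_nonneg (hw0 j hj) (by positivity)
    exact (Finset.sum_eq_zero_iff_of_nonneg hnn).1 key i hi
  have hsq : (z i 0 - b 0) ^ 2 + (z i 1 - b 1) ^ 2 = 0 := by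
    rcases mul_eq_zero.1 hterm with h | h
    · exact absurd h (ne_of_gt hwi)
    · exact h
  have h0 : z i 0 = b 0 := by nlinarith [sq_nonneg (z i 0 - b 0), sq_nonneg (z i 1 - b 1)]
  have h1 : z i 1 = b 1 := by nlinarith [sq_nonneg (z i 0 - b 0), sq_nonneg (z i 1 - b 1)]
  have h2 : z i 2 = b 2 := by rw [hzpar i hi, hbpar, h0, h1]
  have : z i = b := by
    ext j
    fin_cases j <;> assumption
  exact (hz i hi).2 (by simp [this])
end

section
/- Let D be a finite set of points in ℝ² whose pairwise Euclidean distances are all at least 2, let L = lift(D), let B be the set of blocking points, and let P = L ∪ B; suppose L and B are disjoint, and let m be a natural number. Then D contains an independent set of size m if and only if there exists a subset S ⊆ P with |S| = m + |B| that is in empty convex position (S is in convex position and the convex hull of S contains no point of P \ S). -/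
namespace AuxIndepProof

local notation "E2" => EuclideanSpace ℝ (Fin 2)
local notation "E3" => EuclideanSpace ℝ (Fin 3)

lemma lift0 (x : E2) : lift x 0 = x 0 := rfl
lemma lift1 (x : E2) : lift x 1 = x 1 := rfl
lemma lift2 (x : E2) : lift x 2 = x 0 ^ 2 + x 1 ^ 2 := rfl

lemma e2_ext {x y : E2} (h0 : x 0 = y 0) (h1 : x 1 = y 1) : x = y := by
  ext i; fin_cases i <;> assumption

lemma lift_inj : Function.Injective lift := by
  intro x y h
  exact e2_ext (by rw [← lift0 x, ← lift0 y, h]) (by rw [← lift1 x, ← lift1 y, h])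

noncomputable def d2 (x y : E2) : ℝ := (x 0 - y 0)^2 + (x 1 - y 1)^2

lemma dist_eq_sqrt (x y : E2) : dist x y = Real.sqrt (d2 x y) := by
  rw [EuclideanSpace.dist_eq]
  congr 1
  simp [Fin.sum_univ_two, Real.dist_eq, sq_abs, d2]

lemma d2_nonneg (x y : E2) : 0 ≤ d2 x y := by unfold d2; positivity

lemma dist_sq (x y : E2) : dist x y ^ 2 = d2 x y := by
  rw [dist_eq_sqrt, Real.sq_sqrt (d2_nonneg x y)]

lemma four_le_d2 {x y : E2} (h : 2 ≤ dist x y) : 4 ≤ d2 x y := by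
  nlinarith [dist_sq x y, dist_nonneg (x := x) (y := y)]

lemma d2_eq_four {x y : E2} (h : dist x y = 2) : d2 x y = 4 := by
  rw [← dist_sq, h]; norm_num

lemma dist_eq_two_of_d2 {x y : E2} (h : d2 x y = 4) : dist x y = 2 := by
  rw [dist_eq_sqrt, h]
  rw [show (4:ℝ) = 2^2 by norm_num, Real.sqrt_sq (by norm_num)]

noncomputable def gfun (p : E3) : ℝ := p 2 - p 0 ^ 2 - p 1 ^ 2

lemma gfun_lift (x : E2) : gfun (lift x) = 0 := by
  simp [gfun, lift0, lift1, lift2]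

lemma bl_apply (c c' : E2) (k : Fin 3) :
    ((1/2 : ℝ) • (lift c + lift c')) k = (1/2) * (lift c k + lift c' k) := rfl

lemma gfun_blocker {c c' : E2} (h : dist c c' = 2) :
    gfun ((1/2 : ℝ) • (lift c + lift c')) = 1 := by
  have h4 := d2_eq_four h
  unfold d2 at h4
  simp only [gfun, bl_apply, lift0, lift1, lift2]
  nlinarith [h4]

lemma sum_apply {ι : Type} (t : Finset ι) (w : ι → ℝ) (z : ι → E3) (k : Fin 3) :
    (∑ i ∈ t, w i • z i) k = ∑ i ∈ t, w i * z i k := by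
  induction t using Finset.cons_induction with
  | empty => rfl
  | cons a s ha ih => rw [Finset.sum_cons, Finset.sum_cons, ← ih]; rfl

lemma master {ι : Type} (t : Finset ι) (w : ι → ℝ) (z : ι → E3) (x : E3)
    (hw1 : ∑ i ∈ t, w i = 1) (hx : ∑ i ∈ t, w i • z i = x) :
    gfun x = ∑ i ∈ t, w i * (gfun (z i) + (z i 0 - x 0)^2 + (z i 1 - x 1)^2) := by
  have h0 : x 0 = ∑ i ∈ t, w i * z i 0 := by rw [← hx, sum_apply]
  have h1 : x 1 = ∑ i ∈ t, w i * z i 1 := by rw [← hx, sum_apply]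
  have h2 : x 2 = ∑ i ∈ t, w i * z i 2 := by rw [← hx, sum_apply]
  have key : ∑ i ∈ t, w i * (gfun (z i) + (z i 0 - x 0)^2 + (z i 1 - x 1)^2)
      = ∑ i ∈ t, (w i * z i 2 - (2 * x 0) * (w i * z i 0) - (2 * x 1) * (w i * z i 1)
          + (x 0 ^ 2 + x 1 ^ 2) * w i) :=
    Finset.sum_congr rfl (fun i _ => by unfold gfun; ring)
  rw [key, Finset.sum_add_distrib, Finset.sum_sub_distrib, Finset.sum_sub_distrib,
    ← Finset.mul_sum, ← Finset.mul_sum, ← Finset.mul_sum, ← h0, ← h1, ← h2, hw1]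
  unfold gfun; ring

lemma exists_wpos {ι : Type} {t : Finset ι} {w : ι → ℝ} (hw1 : ∑ i ∈ t, w i = 1) :
    ∃ i ∈ t, w i ≠ 0 := by
  by_contra hcon
  push_neg at hcon
  rw [Finset.sum_eq_zero hcon] at hw1
  norm_num at hw1

/-- Core lemma 1: a lifted point not in `T ⊆ P` is not in the convex hull of `T`. -/
lemma lift_notin_hull {D : Set E2} {a : E2} {T : Set E3}
    (hT : T ⊆ lift '' D ∪ blockers D) (hTa : lift a ∉ T) :
    lift a ∉ convexHull ℝ T := by
  intro hmem
  rw [convexHull_eq] at hmem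
  obtain ⟨ι, t, w, z, hw0, hw1, hz, hcm⟩ := hmem
  have hx : ∑ i ∈ t, w i • z i = lift a := by
    rw [← Finset.centerMass_eq_of_sum_1 t z hw1]; exact hcm
  have hm := master t w z (lift a) hw1 hx
  rw [gfun_lift] at hm
  have hgz : ∀ i ∈ t, 0 ≤ gfun (z i) := by
    intro i hi
    rcases hT (hz i hi) with ⟨c, _, hzc⟩ | ⟨c, _, c', _, hcc, hzc⟩
    · rw [← hzc, gfun_lift]
    · rw [hzc, gfun_blocker hcc]; norm_num
  have hnn : ∀ i ∈ t,
      0 ≤ w i * (gfun (z i) + (z i 0 - lift a 0)^2 + (z i 1 - lift a 1)^2) := by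
    intro i hi
    exact mul_nonneg (hw0 i hi)
      (add_nonneg (add_nonneg (hgz i hi) (sq_nonneg _)) (sq_nonneg _))
  have hall := (Finset.sum_eq_zero_iff_of_nonneg hnn).1 hm.symm
  obtain ⟨i, hi, hwi⟩ := exists_wpos hw1
  have hterm0 : gfun (z i) + (z i 0 - lift a 0)^2 + (z i 1 - lift a 1)^2 = 0 := by
    rcases mul_eq_zero.1 (hall i hi) with h | h
    · exact absurd h hwi
    · exact h
  rcases hT (hz i hi) with ⟨c, _, hzc⟩ | ⟨c, _, c', _, hcc, hzc⟩
  · have hg : gfun (z i) = 0 := by rw [← hzc, gfun_lift]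
    have hc0 : z i 0 = lift a 0 := by
      nlinarith [sq_nonneg (z i 0 - lift a 0), sq_nonneg (z i 1 - lift a 1)]
    have hc1 : z i 1 = lift a 1 := by
      nlinarith [sq_nonneg (z i 0 - lift a 0), sq_nonneg (z i 1 - lift a 1)]
    have : c = a := by
      refine e2_ext ?_ ?_
      · rw [← lift0 c, hzc, hc0, lift0]
      · rw [← lift1 c, hzc, hc1, lift1]
    subst this
    exact hTa (hzc ▸ hz i hi)
  · have hg : gfun (z i) = 1 := by rw [hzc, gfun_blocker hcc]
    nlinarith [sq_nonneg (z i 0 - lift a 0), sq_nonneg (z i 1 - lift a 1)]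


/-- Classification of the "energy" term for the blocker exclusion argument. -/
lemma keyB {D : Set E2} (hsep : ∀ p ∈ D, ∀ q ∈ D, p ≠ q → 2 ≤ dist p q)
    {c c' : E2} (hc : c ∈ D) (hc' : c' ∈ D) (hcc : dist c c' = 2)
    {z : E3} (hz : z ∈ lift '' D ∪ blockers D)
    (hzb : z ≠ (1/2 : ℝ) • (lift c + lift c')) :
    (gfun z + (z 0 - (c 0 + c' 0)/2)^2 + (z 1 - (c 1 + c' 1)/2)^2 = 1
        ∧ (z = lift c ∨ z = lift c'))
    ∨ 2 ≤ gfun z + (z 0 - (c 0 + c' 0)/2)^2 + (z 1 - (c 1 + c' 1)/2)^2 := by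
  have h4 : d2 c c' = 4 := d2_eq_four hcc
  unfold d2 at h4
  rcases hz with ⟨a, ha, rfl⟩ | ⟨d, hd, e, he, hde, rfl⟩
  · simp only [gfun_lift, lift0, lift1]
    by_cases hac : a = c
    · subst hac
      exact Or.inl ⟨by linear_combination h4 / 4, Or.inl rfl⟩
    · by_cases hac' : a = c'
      · subst hac'
        exact Or.inl ⟨by linear_combination h4 / 4, Or.inr rfl⟩
      · right
        have h1 := four_le_d2 (hsep a ha c hc hac)
        have h2 := four_le_d2 (hsep a ha c' hc' hac')
        unfold d2 at h1 h2
        nlinarith [h1, h2, h4]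
  · right
    rw [gfun_blocker hde]
    simp only [bl_apply, lift0, lift1]
    have h4de : d2 d e = 4 := d2_eq_four hde
    unfold d2 at h4de
    by_cases hdc : d = c
    · subst hdc
      have hec' : e ≠ c' := by
        intro h; exact hzb (by rw [h])
      have h1 := four_le_d2 (hsep e he c' hc' hec')
      unfold d2 at h1
      nlinarith [h1]
    · by_cases hdc' : d = c'
      · subst hdc'
        have hec : e ≠ c := by
          intro h; refine hzb ?_; rw [h, add_comm]
        have h1 := four_le_d2 (hsep e he c hc hec)
        unfold d2 at h1
        nlinarith [h1]
      · by_cases hec : e = c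
        · subst hec
          have h1 := four_le_d2 (hsep d hd c' hc' hdc')
          unfold d2 at h1
          nlinarith [h1]
        · by_cases hec' : e = c'
          · subst hec'
            have h1 := four_le_d2 (hsep d hd c hc hdc)
            unfold d2 at h1
            nlinarith [h1]
          · have h1 := four_le_d2 (hsep d hd c hc hdc)
            have h2 := four_le_d2 (hsep d hd c' hc' hdc')
            have h3 := four_le_d2 (hsep e he c hc hec)
            have h5 := four_le_d2 (hsep e he c' hc' hec')
            unfold d2 at h1 h2 h3 h5
            nlinarith [h1, h2, h3, h5, h4, h4de]

/-- Core lemma 2: a blocker with at most one lifted endpoint in `T ⊆ P`, itself not in `T`,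
is not in the convex hull of `T`. -/
lemma blocker_notin_hull {D : Set E2} (hsep : ∀ p ∈ D, ∀ q ∈ D, p ≠ q → 2 ≤ dist p q)
    {c c' : E2} (hc : c ∈ D) (hc' : c' ∈ D) (hcc : dist c c' = 2) {T : Set E3}
    (hT : T ⊆ lift '' D ∪ blockers D)
    (hbT : (1/2 : ℝ) • (lift c + lift c') ∉ T)
    (hone : ¬(lift c ∈ T ∧ lift c' ∈ T)) :
    (1/2 : ℝ) • (lift c + lift c') ∉ convexHull ℝ T := by
  set b : E3 := (1/2 : ℝ) • (lift c + lift c') with hbdef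
  intro hmem
  rw [convexHull_eq] at hmem
  obtain ⟨ι, t, w, z, hw0, hw1, hz, hcm⟩ := hmem
  have hx : ∑ i ∈ t, w i • z i = b := by
    rw [← Finset.centerMass_eq_of_sum_1 t z hw1]; exact hcm
  have hb0 : b 0 = (c 0 + c' 0)/2 := by rw [hbdef, bl_apply, lift0, lift0]; ring
  have hb1 : b 1 = (c 1 + c' 1)/2 := by rw [hbdef, bl_apply, lift1, lift1]; ring
  have hm := master t w z b hw1 hx
  rw [gfun_blocker hcc, hb0, hb1] at hm
  have hkey : ∀ i ∈ t,
      (gfun (z i) + (z i 0 - (c 0 + c' 0)/2)^2 + (z i 1 - (c 1 + c' 1)/2)^2 = 1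
        ∧ (z i = lift c ∨ z i = lift c'))
      ∨ 2 ≤ gfun (z i) + (z i 0 - (c 0 + c' 0)/2)^2 + (z i 1 - (c 1 + c' 1)/2)^2 := by
    intro i hi
    exact keyB hsep hc hc' hcc (hT (hz i hi)) (fun h => hbT (by rw [hbdef, ← h]; exact hz i hi))
  have hge1 : ∀ i ∈ t,
      1 ≤ gfun (z i) + (z i 0 - (c 0 + c' 0)/2)^2 + (z i 1 - (c 1 + c' 1)/2)^2 := by
    intro i hi
    rcases hkey i hi with ⟨h, _⟩ | h
    · linarith
    · linarith
  have hzero : ∑ i ∈ t, w i *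
      ((gfun (z i) + (z i 0 - (c 0 + c' 0)/2)^2 + (z i 1 - (c 1 + c' 1)/2)^2) - 1) = 0 := by
    have hsplit : ∑ i ∈ t, w i *
        ((gfun (z i) + (z i 0 - (c 0 + c' 0)/2)^2 + (z i 1 - (c 1 + c' 1)/2)^2) - 1)
        = (∑ i ∈ t, w i * (gfun (z i) + (z i 0 - (c 0 + c' 0)/2)^2
            + (z i 1 - (c 1 + c' 1)/2)^2)) - ∑ i ∈ t, w i := by
      rw [← Finset.sum_sub_distrib]
      exact Finset.sum_congr rfl (fun i _ => by ring)
    rw [hsplit, ← hm, hw1]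
    ring
  have hall := (Finset.sum_eq_zero_iff_of_nonneg (fun i hi =>
    mul_nonneg (hw0 i hi) (by linarith [hge1 i hi]))).1 hzero
  have hend : ∀ i ∈ t, w i ≠ 0 → (z i = lift c ∨ z i = lift c') := by
    intro i hi hwi
    have hterm : gfun (z i) + (z i 0 - (c 0 + c' 0)/2)^2 + (z i 1 - (c 1 + c' 1)/2)^2 = 1 := by
      rcases mul_eq_zero.1 (hall i hi) with h | h
      · exact absurd h hwi
      · linarith
    rcases hkey i hi with ⟨_, h⟩ | h
    · exact h
    · linarith
  obtain ⟨i₀, hi₀, hwi₀⟩ := exists_wpos hw1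
  have hcommon : ∃ e : E2, (e = c ∨ e = c') ∧ ∀ i ∈ t, w i ≠ 0 → z i = lift e := by
    rcases hend i₀ hi₀ hwi₀ with h₀ | h₀
    · refine ⟨c, Or.inl rfl, fun i hi hwi => ?_⟩
      rcases hend i hi hwi with h | h
      · exact h
      · exact absurd ⟨h₀ ▸ hz i₀ hi₀, h ▸ hz i hi⟩ hone
    · refine ⟨c', Or.inr rfl, fun i hi hwi => ?_⟩
      rcases hend i hi hwi with h | h
      · exact absurd ⟨h ▸ hz i hi, h₀ ▸ hz i₀ hi₀⟩ hone
      · exact h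
  obtain ⟨e, hecc, hze⟩ := hcommon
  have hb0' : (c 0 + c' 0)/2 = e 0 := by
    rw [← hb0, ← hx, sum_apply]
    rw [show (∑ i ∈ t, w i * z i 0) = ∑ i ∈ t, w i * e 0 from
      Finset.sum_congr rfl (fun i hi => by
        by_cases hwi : w i = 0
        · rw [hwi]; ring
        · rw [hze i hi hwi, lift0])]
    rw [← Finset.sum_mul, hw1, one_mul]
  have hb1' : (c 1 + c' 1)/2 = e 1 := by
    rw [← hb1, ← hx, sum_apply]
    rw [show (∑ i ∈ t, w i * z i 1) = ∑ i ∈ t, w i * e 1 from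
      Finset.sum_congr rfl (fun i hi => by
        by_cases hwi : w i = 0
        · rw [hwi]; ring
        · rw [hze i hi hwi, lift1])]
    rw [← Finset.sum_mul, hw1, one_mul]
  have h4 : d2 c c' = 4 := d2_eq_four hcc
  unfold d2 at h4
  rcases hecc with rfl | rfl
  · nlinarith [hb0', hb1', h4]
  · nlinarith [hb0', hb1', h4]

end AuxIndepProof

open AuxIndepProof in
/-- Let `D ⊆ ℝ²` be finite with pairwise distances at least `2`, let
`L = lift '' D`, `B` the blocking points, `P = L ∪ B`, with `L` and `B` disjoint, and let
`m : ℕ`. Then `D` contains an independent set of size `m` iff there exists `S ⊆ P` with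
`|S| = m + |B|` in empty convex position. -/
theorem independent_set_iff_empty_convex_set (D : Set (EuclideanSpace ℝ (Fin 2)))
    (hD : D.Finite) (hsep : ∀ p ∈ D, ∀ q ∈ D, p ≠ q → 2 ≤ dist p q)
    (hdisj : Disjoint (lift '' D) (blockers D)) (m : ℕ) :
    (∃ I ⊆ D, (∀ p ∈ I, ∀ q ∈ I, p ≠ q → 2 < dist p q) ∧ I.ncard = m) ↔
      ∃ S ⊆ lift '' D ∪ blockers D, S.ncard = m + (blockers D).ncard ∧
        (∀ p ∈ S, p ∉ convexHull ℝ (S \ {p})) ∧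
        ∀ p ∈ (lift '' D ∪ blockers D) \ S, p ∉ convexHull ℝ S := by
  classical
  have hBfin : (blockers D).Finite := by
    have hsub : blockers D ⊆ (fun p : (EuclideanSpace ℝ (Fin 2)) × (EuclideanSpace ℝ (Fin 2)) =>
        (1/2 : ℝ) • (lift p.1 + lift p.2)) '' (D ×ˢ D) := by
      rintro b ⟨c, hc, c', hc', _, rfl⟩
      exact ⟨(c, c'), Set.mk_mem_prod hc hc', rfl⟩
    exact ((hD.prod hD).image _).subset hsub
  have hLfin : (lift '' D).Finite := hD.image _
  constructor
  · rintro ⟨I, hID, hind, hcard⟩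
    have hIfin : I.Finite := hD.subset hID
    have hSsub : lift '' I ∪ blockers D ⊆ lift '' D ∪ blockers D := by
      intro x hx
      rcases hx with h | h
      · exact Or.inl (Set.image_mono hID h)
      · exact Or.inr h
    refine ⟨lift '' I ∪ blockers D, hSsub, ?_, ?_, ?_⟩
    · rw [Set.ncard_union_eq (hdisj.mono_left (Set.image_mono hID)) (hIfin.image _) hBfin,
        Set.ncard_image_of_injective _ lift_inj, hcard]
    · intro p hp
      rcases hp with ⟨a, haI, rfl⟩ | hpB
      · exact lift_notin_hull (Set.diff_subset.trans hSsub) (fun h => h.2 rfl)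
      · obtain ⟨c, hc, c', hc', hcc, rfl⟩ := hpB
        refine blocker_notin_hull hsep hc hc' hcc (Set.diff_subset.trans hSsub)
          (fun h => h.2 rfl) ?_
        rintro ⟨h1, h2⟩
        have hcc' : c ≠ c' := by
          intro h
          rw [h, dist_self] at hcc
          norm_num at hcc
        have hcI : c ∈ I := by
          rcases h1.1 with ⟨a, haI, ha⟩ | hB1
          · rwa [← lift_inj ha]
          · exact (Set.disjoint_left.1 hdisj ⟨c, hc, rfl⟩ hB1).elim
        have hc'I : c' ∈ I := by
          rcases h2.1 with ⟨a, haI, ha⟩ | hB1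
          · rwa [← lift_inj ha]
          · exact (Set.disjoint_left.1 hdisj ⟨c', hc', rfl⟩ hB1).elim
        have := hind c hcI c' hc'I hcc'
        rw [hcc] at this
        norm_num at this
    · intro p hp
      obtain ⟨hpP, hpS⟩ := hp
      rcases hpP with ⟨a, haD, rfl⟩ | hpB
      · exact lift_notin_hull hSsub hpS
      · exact absurd (Or.inr hpB) hpS
  · rintro ⟨S, hSP, hScard, hconv, hempty⟩
    set I' : Set (EuclideanSpace ℝ (Fin 2)) := {a | a ∈ D ∧ lift a ∈ S} with hI'def
    have hI'D : I' ⊆ D := fun a ha => ha.1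
    have hI'ind : ∀ p ∈ I', ∀ q ∈ I', p ≠ q → 2 < dist p q := by
      intro p hp q hq hpq
      refine lt_of_le_of_ne (hsep p hp.1 q hq.1 hpq) (fun heq => ?_)
      have hdist : dist p q = 2 := heq.symm
      set b' : EuclideanSpace ℝ (Fin 3) := (1/2 : ℝ) • (lift p + lift q) with hb'
      have hb'B : b' ∈ blockers D := ⟨p, hp.1, q, hq.1, hdist, hb'⟩
      have hlpb : lift p ≠ b' := fun h =>
        Set.disjoint_left.1 hdisj ⟨p, hp.1, rfl⟩ (h ▸ hb'B)
      have hlqb : lift q ≠ b' := fun h =>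
        Set.disjoint_left.1 hdisj ⟨q, hq.1, rfl⟩ (h ▸ hb'B)
      have hmid : ∀ T : Set (EuclideanSpace ℝ (Fin 3)),
          lift p ∈ T → lift q ∈ T → b' ∈ convexHull ℝ T := by
        intro T h1 h2
        have hcx := (convex_convexHull ℝ T) (subset_convexHull ℝ T h1)
          (subset_convexHull ℝ T h2)
          (by norm_num : (0:ℝ) ≤ 1/2) (by norm_num : (0:ℝ) ≤ 1/2) (by norm_num)
        rw [hb', smul_add]
        exact hcx
      by_cases hb'S : b' ∈ S
      · exact hconv b' hb'S (hmid _ ⟨hp.2, hlpb⟩ ⟨hq.2, hlqb⟩)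
      · exact hempty b' ⟨Or.inr hb'B, hb'S⟩ (hmid S hp.2 hq.2)
    have hSL : S ∩ (lift '' D) = lift '' I' := by
      ext p
      constructor
      · rintro ⟨hpS, a, haD, rfl⟩
        exact ⟨a, ⟨haD, hpS⟩, rfl⟩
      · rintro ⟨a, ⟨haD, haS⟩, rfl⟩
        exact ⟨haS, a, haD, rfl⟩
    have hdecomp : S = (S ∩ (lift '' D)) ∪ (S ∩ blockers D) := by
      rw [← Set.inter_union_distrib_left]
      exact (Set.inter_eq_left.mpr hSP).symm
    have e1 : (S ∩ (lift '' D)).ncard = I'.ncard := by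
      rw [hSL, Set.ncard_image_of_injective _ lift_inj]
    have e2 : (S ∩ blockers D).ncard ≤ (blockers D).ncard :=
      Set.ncard_le_ncard Set.inter_subset_right hBfin
    have hle : S.ncard ≤ (S ∩ (lift '' D)).ncard + (S ∩ blockers D).ncard := by
      nth_rewrite 1 [hdecomp]
      exact Set.ncard_union_le _ _
    have hmI : m ≤ I'.ncard := by omega
    obtain ⟨I, hII', hIcard⟩ := Set.exists_subset_card_eq hmI
    exact ⟨I, hII'.trans hI'D, fun p hp q hq hpq => hI'ind p (hII' hp) q (hII' hq) hpq, hIcard⟩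
end

section
/- Let D be a finite set of points in ℝ² whose pairwise Euclidean distances are all at least 2, let L = lift(D), let B be the set of blocking points, and let P = L ∪ B; suppose L and B are disjoint, and let m be a natural number. Then D contains an independent set of size m if and only if there exists a subset S ⊆ P with |S| = m + |B| that is in convex position. -/
namespace Aux

local notation "E2" => EuclideanSpace ℝ (Fin 2)
local notation "E3" => EuclideanSpace ℝ (Fin 3)

lemma lift0 (x : E2) : lift x 0 = x 0 := rfl
lemma lift1 (x : E2) : lift x 1 = x 1 := rfl
lemma lift2 (x : E2) : lift x 2 = x 0 ^ 2 + x 1 ^ 2 := rfl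

lemma bl0 (c c' : E2) : ((1 / 2 : ℝ) • (lift c + lift c')) 0 = (c 0 + c' 0) / 2 := by
  simp [PiLp.smul_apply, PiLp.add_apply, lift0, smul_eq_mul]; ring

lemma bl1 (c c' : E2) : ((1 / 2 : ℝ) • (lift c + lift c')) 1 = (c 1 + c' 1) / 2 := by
  simp [PiLp.smul_apply, PiLp.add_apply, lift1, smul_eq_mul]; ring

lemma bl2 (c c' : E2) :
    ((1 / 2 : ℝ) • (lift c + lift c')) 2 =
      (c 0 ^ 2 + c 1 ^ 2 + c' 0 ^ 2 + c' 1 ^ 2) / 2 := by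
  simp [PiLp.smul_apply, PiLp.add_apply, lift2, smul_eq_mul]; ring

lemma ext2 {x y : E2} (h0 : x 0 = y 0) (h1 : x 1 = y 1) : x = y := by
  ext i; fin_cases i <;> assumption

lemma dsq (x y : E2) : dist x y ^ 2 = (x 0 - y 0) ^ 2 + (x 1 - y 1) ^ 2 := by
  rw [EuclideanSpace.dist_eq, Real.sq_sqrt (by positivity)]
  simp [Fin.sum_univ_two, Real.dist_eq, sq_abs]

lemma dsq_ge {x y : E2} (h : 2 ≤ dist x y) :
    4 ≤ (x 0 - y 0) ^ 2 + (x 1 - y 1) ^ 2 := by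
  have := dsq x y; nlinarith

lemma dsq_eq {x y : E2} (h : dist x y = 2) :
    (x 0 - y 0) ^ 2 + (x 1 - y 1) ^ 2 = 4 := by
  have := dsq x y; rw [h] at this; linarith

lemma lift_inj : Function.Injective lift := by
  intro x y h
  exact ext2 (congrArg (fun p : E3 => p 0) h) (congrArg (fun p : E3 => p 1) h)

lemma lin_aux (a0 a1 : ℝ) :
    IsLinearMap ℝ (fun p : E3 => p 2 + a0 * p 0 + a1 * p 1) := by
  constructor
  · intro x y; simp only [PiLp.add_apply]; ring
  · intro r x; simp only [PiLp.smul_apply, smul_eq_mul]; ring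

variable {E : Type*} [AddCommGroup E] [Module ℝ E]

lemma notMem_hull_of_pos {l : E → ℝ} (hl : IsLinearMap ℝ l) {k : ℝ} {b : E} {T : Set E}
    (hb : l b + k = 0) (hT : ∀ x ∈ T, 0 < l x + k) : b ∉ convexHull ℝ T := by
  intro hmem
  have hconv : Convex ℝ {x : E | -k < l x} := convex_halfSpace_gt hl (-k)
  have : b ∈ {x : E | -k < l x} :=
    convexHull_min (fun x hx => by have := hT x hx; simp only [Set.mem_setOf_eq]; linarith)
      hconv hmem
  simp only [Set.mem_setOf_eq] at this
  linarith

lemma mem_hull_zero_set {l : E → ℝ} (hl : IsLinearMap ℝ l) {k : ℝ} {b : E} {T : Set E}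
    (hb : b ∈ convexHull ℝ T) (h0 : l b + k = 0) (hT : ∀ x ∈ T, 0 ≤ l x + k) :
    b ∈ convexHull ℝ {x ∈ T | l x + k = 0} := by
  classical
  rw [convexHull_eq] at hb
  obtain ⟨ι, t, w, z, hw0, hw1, hz, hcm⟩ := hb
  have hbsum : b = ∑ i ∈ t, w i • z i := by
    rw [← hcm, Finset.centerMass_eq_of_sum_1 _ _ hw1]
  have hsum0 : ∑ i ∈ t, w i * (l (z i) + k) = 0 := by
    have hlb : l b = ∑ i ∈ t, w i * l (z i) := by
      have h' : l b = (hl.mk' l) b := rfl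
      rw [h', hbsum, map_sum]
      simp [IsLinearMap.mk'_apply, map_smul, smul_eq_mul]
    calc ∑ i ∈ t, w i * (l (z i) + k) = (∑ i ∈ t, w i * l (z i)) + (∑ i ∈ t, w i) * k := by
          rw [Finset.sum_mul, ← Finset.sum_add_distrib]; congr 1; ext i; ring
      _ = l b + k := by rw [← hlb, hw1, one_mul]
      _ = 0 := h0
  have hzero : ∀ i ∈ t, w i * (l (z i) + k) = 0 :=
    (Finset.sum_eq_zero_iff_of_nonneg
      (fun i hi => mul_nonneg (hw0 i hi) (hT _ (hz i hi)))).mp hsum0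
  have hcm' : {i ∈ t | w i ≠ 0}.centerMass w z = b := by
    rw [Finset.centerMass_filter_ne_zero, hcm]
  rw [← hcm']
  refine Finset.centerMass_mem_convexHull _ (fun i hi => hw0 i (Finset.mem_filter.mp hi).1)
    ?_ (fun i hi => ?_)
  · have h1 : ∑ i ∈ {i ∈ t | w i ≠ 0}, w i = 1 := by
      rw [Finset.sum_filter_ne_zero, hw1]
    rw [h1]; norm_num
  · obtain ⟨hit, hwne⟩ := Finset.mem_filter.mp hi
    refine ⟨hz i hit, ?_⟩
    rcases mul_eq_zero.mp (hzero i hit) with h | h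
    · exact absurd h hwne
    · exact h

/-- Uniqueness of the touching pair producing a given blocking point (midpoint level). -/
lemma pair_unique {c c' d d' : E2}
    (hdc : d ≠ c → 2 ≤ dist d c) (hdc' : d ≠ c' → 2 ≤ dist d c')
    (h2 : dist c c' = 2) (h2' : dist d d' = 2)
    (e0 : c 0 + c' 0 = d 0 + d' 0) (e1 : c 1 + c' 1 = d 1 + d' 1) :
    (d = c ∧ d' = c') ∨ (d = c' ∧ d' = c) := by
  have hcc := dsq_eq h2
  have hdd := dsq_eq h2'
  have hd_mem : d = c ∨ d = c' := by
    by_contra h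
    push_neg at h
    have h1 : 4 ≤ (d 0 - c 0) ^ 2 + (d 1 - c 1) ^ 2 := dsq_ge (hdc h.1)
    have h2'' : 4 ≤ (d 0 - c' 0) ^ 2 + (d 1 - c' 1) ^ 2 := dsq_ge (hdc' h.2)
    have r0 : d 0 - d' 0 = 2 * d 0 - c 0 - c' 0 := by linarith
    have r1 : d 1 - d' 1 = 2 * d 1 - c 1 - c' 1 := by linarith
    rw [r0, r1] at hdd
    linarith [hdd, hcc, h1, h2'']
  rcases hd_mem with rfl | rfl
  · exact Or.inl ⟨rfl, ext2 (by linarith) (by linarith)⟩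
  · exact Or.inr ⟨rfl, ext2 (by linarith) (by linarith)⟩

lemma blocker_coords {c c' d d' : E2}
    (heq : (1 / 2 : ℝ) • (lift c + lift c') = (1 / 2 : ℝ) • (lift d + lift d')) :
    c 0 + c' 0 = d 0 + d' 0 ∧ c 1 + c' 1 = d 1 + d' 1 := by
  constructor
  · have h := congrArg (fun p : E3 => p 0) heq
    simp only [bl0] at h; linarith
  · have h := congrArg (fun p : E3 => p 1) heq
    simp only [bl1] at h; linarith

lemma blockers_finite {D : Set E2} (hD : D.Finite) : (blockers D).Finite := by
  have : blockers D ⊆ (fun q : E2 × E2 => (1 / 2 : ℝ) • (lift q.1 + lift q.2)) '' (D ×ˢ D) := by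
    rintro b ⟨c, hc, c', hc', -, rfl⟩
    exact ⟨(c, c'), Set.mk_mem_prod hc hc', rfl⟩
  exact ((hD.prod hD).image _).subset this

/-- A lifted point of `D` is never in the convex hull of other points of `lift '' D ∪ blockers D`. -/
lemma lift_not_mem_hull {D : Set E2}
    (hsep : ∀ p ∈ D, ∀ q ∈ D, p ≠ q → 2 ≤ dist p q) {c : E2} (hc : c ∈ D)
    {T : Set E3} (hT : T ⊆ (lift '' D ∪ blockers D) \ {lift c}) :
    lift c ∉ convexHull ℝ T := by
  refine notMem_hull_of_pos (lin_aux (-2 * c 0) (-2 * c 1)) (k := c 0 ^ 2 + c 1 ^ 2)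
    (b := lift c) ?_ ?_
  · simp only [lift0, lift1, lift2]; ring
  · intro x hx
    obtain ⟨hxP, hxne⟩ := hT hx
    simp only [Set.mem_singleton_iff] at hxne
    rcases hxP with ⟨d, hd, rfl⟩ | ⟨e, he, e', he', h2, rfl⟩
    · have hdc : d ≠ c := fun h => hxne (by rw [h])
      have h4 := dsq_ge (hsep d hd c hc hdc)
      simp only [lift0, lift1, lift2]
      linarith [h4]
    · have hee' : e ≠ e' := by
        intro h; rw [h, dist_self] at h2; norm_num at h2
      simp only [bl0, bl1, bl2]
      by_cases hec : e = c
      · subst hec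
        have h4 := dsq_ge (hsep e' he' e he (Ne.symm hee'))
        linarith [h4, sq_nonneg (e 0 - e 0)]
      · have h4 := dsq_ge (hsep e he c hc hec)
        by_cases hec' : e' = c
        · subst hec'
          linarith [h4]
        · have h4' := dsq_ge (hsep e' he' c hc hec')
          linarith [h4, h4']

/-- A blocking point is not in the convex hull of the other points of `lift '' I ∪ blockers D`,
provided one endpoint of its touching pair is missing from `I`. -/
lemma blocker_not_mem_hull {D : Set E2}
    (hsep : ∀ p ∈ D, ∀ q ∈ D, p ≠ q → 2 ≤ dist p q)
    (hdisj : Disjoint (lift '' D) (blockers D))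
    {I : Set E2} (hI : I ⊆ D) {c c' : E2} (hc : c ∈ D) (hc' : c' ∈ D)
    (h2 : dist c c' = 2) (hcI' : c' ∉ I) :
    (1 / 2 : ℝ) • (lift c + lift c') ∉
      convexHull ℝ ((lift '' I ∪ blockers D) \ {(1 / 2 : ℝ) • (lift c + lift c')}) := by
  intro hmem
  set b : E3 := (1 / 2 : ℝ) • (lift c + lift c') with hb
  set T : Set E3 := (lift '' I ∪ blockers D) \ {b} with hTdef
  set a0 : ℝ := -(c 0 + c' 0) with ha0
  set a1 : ℝ := -(c 1 + c' 1) with ha1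
  set k : ℝ := ((c 0 + c' 0) ^ 2 + (c 1 + c' 1) ^ 2) / 4 - 1 with hk
  have hcc := dsq_eq h2
  have hbB : b ∈ blockers D := ⟨c, hc, c', hc', h2, rfl⟩
  -- the affine functional vanishes at b
  have h0 : (b 2 + a0 * b 0 + a1 * b 1) + k = 0 := by
    rw [hb]
    simp only [bl0, bl1, bl2, ha0, ha1, hk]
    ring_nf
    ring_nf at hcc
    linarith [hcc]
  -- it is nonnegative on T
  have hT : ∀ x ∈ T, 0 ≤ (x 2 + a0 * x 0 + a1 * x 1) + k := by
    rintro x ⟨hxP, -⟩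
    rcases hxP with ⟨d, hd, rfl⟩ | ⟨e, he, e', he', h2', rfl⟩
    · -- lifted point: value = |d - M|² - 1 ≥ 0
      simp only [lift0, lift1, lift2, ha0, ha1, hk]
      by_cases hdc : d = c
      · subst hdc; linarith [hcc]
      by_cases hdc' : d = c'
      · subst hdc'; linarith [hcc]
      · have h4 := dsq_ge (hsep d (hI hd) c hc hdc)
        have h4' := dsq_ge (hsep d (hI hd) c' hc' hdc')
        linarith [hcc, h4, h4']
    · -- blocker: value = |M'' - M|² ≥ 0
      simp only [bl0, bl1, bl2, ha0, ha1, hk]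
      have hee := dsq_eq h2'
      linarith [hee, sq_nonneg ((e 0 + e' 0) / 2 - (c 0 + c' 0) / 2),
        sq_nonneg ((e 1 + e' 1) / 2 - (c 1 + c' 1) / 2)]
  have hkey := mem_hull_zero_set (lin_aux a0 a1) hmem h0 hT
  -- the zero set of the functional within T is contained in {lift c}
  have hsub : {x ∈ T | (x 2 + a0 * x 0 + a1 * x 1) + k = 0} ⊆ {lift c} := by
    rintro x ⟨⟨hxP, hxne⟩, hx0⟩
    simp only [Set.mem_singleton_iff] at hxne ⊢
    rcases hxP with ⟨d, hd, rfl⟩ | ⟨e, he, e', he', h2', rfl⟩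
    · -- lifted point with value zero must be lift c or lift c'
      simp only [lift0, lift1, lift2, ha0, ha1, hk] at hx0
      have hdor : d = c ∨ d = c' := by
        by_contra h
        push_neg at h
        have h4 := dsq_ge (hsep d (hI hd) c hc h.1)
        have h4' := dsq_ge (hsep d (hI hd) c' hc' h.2)
        linarith [hcc, h4, h4']
      rcases hdor with rfl | rfl
      · rfl
      · exact absurd hd hcI'
    · -- blocker with value zero must be b itself, contradiction
      exfalso
      apply hxne
      simp only [bl0, bl1, bl2, ha0, ha1, hk] at hx0
      have hee := dsq_eq h2'
      have q0 : ((e 0 + e' 0) / 2 - (c 0 + c' 0) / 2) ^ 2 +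
          ((e 1 + e' 1) / 2 - (c 1 + c' 1) / 2) ^ 2 = 0 := by
        linarith [hee, hx0]
      have q1 : ((e 0 + e' 0) / 2 - (c 0 + c' 0) / 2) ^ 2 = 0 := by
        linarith [sq_nonneg ((e 0 + e' 0) / 2 - (c 0 + c' 0) / 2),
          sq_nonneg ((e 1 + e' 1) / 2 - (c 1 + c' 1) / 2)]
      have q2 : ((e 1 + e' 1) / 2 - (c 1 + c' 1) / 2) ^ 2 = 0 := by
        linarith [sq_nonneg ((e 0 + e' 0) / 2 - (c 0 + c' 0) / 2),
          sq_nonneg ((e 1 + e' 1) / 2 - (c 1 + c' 1) / 2)]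
      have q1' := (pow_eq_zero_iff two_ne_zero).mp q1
      have q2' := (pow_eq_zero_iff two_ne_zero).mp q2
      have e0 : c 0 + c' 0 = e 0 + e' 0 := by linarith
      have e1 : c 1 + c' 1 = e 1 + e' 1 := by linarith
      have := pair_unique (fun h => hsep e he c hc h) (fun h => hsep e he c' hc' h)
        h2 h2' e0 e1
      rcases this with ⟨rfl, rfl⟩ | ⟨rfl, rfl⟩
      · rfl
      · rw [hb, add_comm]
  have : b ∈ convexHull ℝ ({lift c} : Set E3) := convexHull_mono hsub hkey
  rw [convexHull_singleton, Set.mem_singleton_iff] at this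
  exact Set.disjoint_left.mp hdisj ⟨c, hc, this.symm⟩ hbB

end Aux

open Aux in
/-- Let `D ⊆ ℝ²` be finite with pairwise distances at least `2`, let
`L = lift '' D`, `B` the blocking points, `P = L ∪ B`, with `L` and `B` disjoint, and let
`m : ℕ`. Then `D` contains an independent set of size `m` iff there exists `S ⊆ P` with
`|S| = m + |B|` in convex position. -/
theorem independent_set_iff_convex_set (D : Set (EuclideanSpace ℝ (Fin 2)))
    (hD : D.Finite) (hsep : ∀ p ∈ D, ∀ q ∈ D, p ≠ q → 2 ≤ dist p q)
    (hdisj : Disjoint (lift '' D) (blockers D)) (m : ℕ) :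
    (∃ I ⊆ D, (∀ p ∈ I, ∀ q ∈ I, p ≠ q → 2 < dist p q) ∧ I.ncard = m) ↔
      ∃ S ⊆ lift '' D ∪ blockers D, S.ncard = m + (blockers D).ncard ∧
        ∀ p ∈ S, p ∉ convexHull ℝ (S \ {p}) := by
  classical
  have hBfin : (blockers D).Finite := blockers_finite hD
  have hLfin : (lift '' D).Finite := hD.image lift
  constructor
  · -- forward direction
    rintro ⟨I, hI, hind, hcard⟩
    refine ⟨lift '' I ∪ blockers D, Set.union_subset_union_left _ (Set.image_mono hI),
      ?_, ?_⟩
    · rw [Set.ncard_union_eq (Set.disjoint_of_subset_left (Set.image_mono hI) hdisj)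
        ((hD.subset hI).image lift) hBfin, Set.ncard_image_of_injOn (lift_inj.injOn), hcard]
    · rintro p hp
      rcases hp with ⟨c, hcI, rfl⟩ | hpB
      · exact lift_not_mem_hull hsep (hI hcI)
          (Set.diff_subset_diff_left (Set.union_subset_union_left _ (Set.image_mono hI)))
      · obtain ⟨c, hc, c', hc', h2, rfl⟩ := hpB
        have hcc' : c ≠ c' := by
          intro h; rw [h, dist_self] at h2; norm_num at h2
        have hnotboth : c ∉ I ∨ c' ∉ I := by
          by_contra h
          push_neg at h
          exact absurd h2 (ne_of_gt (hind c h.1 c' h.2 hcc'))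
        rcases hnotboth with hcI | hc'I
        · rw [show (1 / 2 : ℝ) • (lift c + lift c') = (1 / 2 : ℝ) • (lift c' + lift c) by
            rw [add_comm]]
          exact blocker_not_mem_hull hsep hdisj hI hc' hc (by rwa [dist_comm]) hcI
        · exact blocker_not_mem_hull hsep hdisj hI hc hc' h2 hc'I
  · -- backward direction
    rintro ⟨S, hS, hcard, hpos⟩
    have hSfin : S.Finite := (hLfin.union hBfin).subset hS
    set J : Set (EuclideanSpace ℝ (Fin 2)) := {c ∈ D | lift c ∈ S} with hJdef
    have hJD : J ⊆ D := Set.sep_subset _ _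
    have hJfin : J.Finite := hD.subset hJD
    set E : Set (EuclideanSpace ℝ (Fin 3)) :=
      {b ∈ blockers D | ∃ c ∈ J, ∃ c' ∈ J, dist c c' = 2 ∧
        b = (1 / 2 : ℝ) • (lift c + lift c')} with hEdef
    have hEB : E ⊆ blockers D := Set.sep_subset _ _
    have hEfin : E.Finite := hBfin.subset hEB
    -- blockers of touching pairs inside J are not in S
    have hES : ∀ b ∈ E, b ∉ S := by
      rintro b ⟨hbB, c, hcJ, c', hc'J, h2, rfl⟩ hbS
      set b : EuclideanSpace ℝ (Fin 3) := (1 / 2 : ℝ) • (lift c + lift c') with hbdef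
      have hlc : lift c ∈ S \ {b} := by
        refine ⟨hcJ.2, ?_⟩
        simp only [Set.mem_singleton_iff]
        intro h
        exact Set.disjoint_left.mp hdisj ⟨c, hcJ.1, rfl⟩ (h ▸ hbB)
      have hlc' : lift c' ∈ S \ {b} := by
        refine ⟨hc'J.2, ?_⟩
        simp only [Set.mem_singleton_iff]
        intro h
        exact Set.disjoint_left.mp hdisj ⟨c', hc'J.1, rfl⟩ (h ▸ hbB)
      have hbseg : b ∈ segment ℝ (lift c) (lift c') := by
        refine ⟨1 / 2, 1 / 2, by norm_num, by norm_num, by norm_num, ?_⟩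
        rw [hbdef, smul_add]
      have : b ∈ convexHull ℝ (S \ {b}) := by
        apply segment_subset_convexHull hlc hlc' hbseg
      exact hpos b hbS this
    -- counting
    have hLJ : lift '' J = S ∩ lift '' D := by
      ext x
      constructor
      · rintro ⟨c, ⟨hcD, hcS⟩, rfl⟩
        exact ⟨hcS, c, hcD, rfl⟩
      · rintro ⟨hxS, c, hcD, rfl⟩
        exact ⟨c, ⟨hcD, hxS⟩, rfl⟩
    have hSsplit : S = (S ∩ lift '' D) ∪ (S ∩ blockers D) := by
      rw [← Set.inter_union_distrib_left, Set.inter_eq_left.mpr hS]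
    have hScard : (S ∩ lift '' D).ncard + (S ∩ blockers D).ncard = m + (blockers D).ncard := by
      rw [← hcard]
      conv_rhs => rw [hSsplit]
      exact (Set.ncard_union_eq
        (Set.disjoint_of_subset Set.inter_subset_right Set.inter_subset_right hdisj)
        (hSfin.subset Set.inter_subset_left) (hSfin.subset Set.inter_subset_left)).symm
    have hSBle : (S ∩ blockers D).ncard ≤ (blockers D).ncard - E.ncard := by
      have hsub : S ∩ blockers D ⊆ blockers D \ E := by
        rintro x ⟨hxS, hxB⟩
        exact ⟨hxB, fun hxE => hES x hxE hxS⟩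
      calc (S ∩ blockers D).ncard ≤ (blockers D \ E).ncard :=
            Set.ncard_le_ncard hsub (hBfin.diff (t := E))
        _ = (blockers D).ncard - E.ncard := Set.ncard_diff hEB hEfin
    have hEleB : E.ncard ≤ (blockers D).ncard := Set.ncard_le_ncard hEB hBfin
    have hJcard : J.ncard = (S ∩ lift '' D).ncard := by
      rw [← hLJ, Set.ncard_image_of_injOn lift_inj.injOn]
    have hJge : m + E.ncard ≤ J.ncard := by omega
    -- choice of one endpoint for each edge-blocker
    set φ : EuclideanSpace ℝ (Fin 3) → EuclideanSpace ℝ (Fin 2) := fun b =>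
      if h : ∃ c ∈ J, ∃ c' ∈ J, dist c c' = 2 ∧ b = (1 / 2 : ℝ) • (lift c + lift c')
      then h.choose else 0 with hφdef
    set R : Set (EuclideanSpace ℝ (Fin 2)) := φ '' E with hRdef
    have hRfin : R.Finite := hEfin.image φ
    have hRcard : R.ncard ≤ E.ncard := Set.ncard_image_le hEfin
    have hIcard : m ≤ (J \ R).ncard := by
      have := Set.ncard_le_ncard_diff_add_ncard J R hRfin
      omega
    obtain ⟨I, hIsub, hIcard'⟩ := Set.exists_subset_card_eq hIcard
    have hIJ : I ⊆ J := hIsub.trans Set.diff_subset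
    refine ⟨I, hIJ.trans hJD, ?_, hIcard'⟩
    intro p hp q hq hpq
    have hpD : p ∈ D := hJD (hIJ hp)
    have hqD : q ∈ D := hJD (hIJ hq)
    have hge : 2 ≤ dist p q := hsep p hpD q hqD hpq
    rcases lt_or_eq_of_le hge with h | h
    · exact h
    exfalso
    have h2 : dist p q = 2 := h.symm
    set b : EuclideanSpace ℝ (Fin 3) := (1 / 2 : ℝ) • (lift p + lift q) with hbdef
    have hbB : b ∈ blockers D := ⟨p, hpD, q, hqD, h2, rfl⟩
    have hbE : b ∈ E := ⟨hbB, p, hIJ hp, q, hIJ hq, h2, rfl⟩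
    have hex : ∃ c ∈ J, ∃ c' ∈ J, dist c c' = 2 ∧ b = (1 / 2 : ℝ) • (lift c + lift c') :=
      ⟨p, hIJ hp, q, hIJ hq, h2, rfl⟩
    have hφb : φ b = hex.choose := by rw [hφdef]; simp only [dif_pos hex]
    obtain ⟨hdJ, d', hd'J, h2', heq⟩ := hex.choose_spec
    set d := hex.choose with hddef
    have hdD : d ∈ D := hJD hdJ
    have hd'D : d' ∈ D := hJD hd'J
    have ⟨e0, e1⟩ := blocker_coords (heq.symm.trans (hbdef.symm))
    have hdpq : (d = p ∧ d' = q) ∨ (d = q ∧ d' = p) := by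
      have heq2 : (1 / 2 : ℝ) • (lift p + lift q) = (1 / 2 : ℝ) • (lift d + lift d') := by
        rw [← hbdef]; exact heq
      obtain ⟨f0, f1⟩ := blocker_coords heq2
      exact pair_unique (fun h => hsep d hdD p hpD h) (fun h => hsep d hdD q hqD h)
        h2 h2' f0 f1
    have hφR : φ b ∈ R := Set.mem_image_of_mem φ hbE
    rw [hφb] at hφR
    rcases hdpq with ⟨hd, -⟩ | ⟨hd, -⟩
    · exact (hIsub hp).2 (hd ▸ hφR)
    · exact (hIsub hq).2 (hd ▸ hφR)
end
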